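/- arXiv:1003.3641 — 2 statements merged into one kernel-verified Lean document; each statement's English description precedes it below -/
import Mathlib

section
/- Let ε'(t) = ∂ε^j − k_j^{-1}(t^j − t)(t^j − 2t^{j-1} + t) ∂²ε^j on (t^{j-1}, t^j], with ∂²ε^j = (∂ε^j − ∂ε^{j-1})/k_j, values in a normed space. Then ∫_{t^{j-1}}^{t^j} ‖ε'(t)‖ dt ≤ (4k_j/3) ‖∂ε^j‖ + (2k_j/3) ‖∂ε^{j-1}‖. -/
/-- L¹-in-time bound for the derivative of the quadratic time reconstruction. -/
theorem elliptic_error_derivative_bound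
    {H : Type*} [NormedAddCommGroup H] [NormedSpace ℝ H]
    (tjm1 tj : ℝ) (h : tjm1 < tj) (kj : ℝ) (hk : kj = tj - tjm1)
    (dejm1 dej d2ej : H)
    (hd2e : d2ej = (kj)⁻¹ • (dej - dejm1))
    (ε' : ℝ → H)
    (hε' : ∀ t, ε' t = dej - (kj⁻¹ * (tj - t) * (tj - 2 * tjm1 + t)) • d2ej) :
    (∫ t in tjm1..tj, ‖ε' t‖) ≤ (4 * kj / 3) * ‖dej‖ + (2 * kj / 3) * ‖dejm1‖ := by
  have hkpos : 0 < kj := by rw [hk]; linarith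
  set c : ℝ → ℝ := fun t => (kj⁻¹ * (tj - t) * (tj - 2 * tjm1 + t)) * kj⁻¹ with hc
  have hrep : ∀ t, ε' t = (1 - c t) • dej + c t • dejm1 := by
    intro t
    rw [hε', hd2e, hc]
    simp only [smul_smul, smul_sub, sub_smul, one_smul]
    abel
  have hc01 : ∀ t ∈ Set.Icc tjm1 tj, 0 ≤ c t ∧ c t ≤ 1 := by
    intro t ht
    obtain ⟨h1, h2⟩ := ht
    have hinv : 0 < kj⁻¹ := inv_pos.mpr hkpos
    have hct : c t = ((tj - t) * (tj - 2 * tjm1 + t)) * (kj⁻¹) ^ 2 := by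
      simp only [hc]; ring
    have hX : 0 ≤ (tj - t) * (tj - 2 * tjm1 + t) := by nlinarith
    constructor
    · rw [hct]; positivity
    · rw [hct]
      have hX2 : (tj - t) * (tj - 2 * tjm1 + t) ≤ kj ^ 2 := by
        nlinarith [sq_nonneg (t - tjm1)]
      have hone : kj ^ 2 * (kj⁻¹) ^ 2 = 1 := by
        rw [← mul_pow, mul_inv_cancel₀ hkpos.ne']; norm_num
      calc (tj - t) * (tj - 2 * tjm1 + t) * (kj⁻¹) ^ 2
          ≤ kj ^ 2 * (kj⁻¹) ^ 2 := by
            exact mul_le_mul_of_nonneg_right hX2 (by positivity)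
        _ = 1 := hone
  have hccont : Continuous c := by rw [hc]; continuity
  have hεcont : Continuous ε' := by
    have : ε' = fun t => (1 - c t) • dej + c t • dejm1 := funext hrep
    rw [this]; continuity
  -- pointwise bound
  have hbd : ∀ t ∈ Set.Icc tjm1 tj,
      ‖ε' t‖ ≤ (1 - c t) * ‖dej‖ + c t * ‖dejm1‖ := by
    intro t ht
    obtain ⟨hc0, hc1⟩ := hc01 t ht
    rw [hrep]
    calc ‖(1 - c t) • dej + c t • dejm1‖ ≤ ‖(1 - c t) • dej‖ + ‖c t • dejm1‖ := norm_add_le _ _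
      _ = (1 - c t) * ‖dej‖ + c t * ‖dejm1‖ := by
          rw [norm_smul, norm_smul, Real.norm_eq_abs, Real.norm_eq_abs,
            abs_of_nonneg (by linarith), abs_of_nonneg hc0]
  -- integral of c
  have hcint : (∫ t in tjm1..tj, c t) = 2 * kj / 3 := by
    have hF : ∀ t ∈ Set.uIcc tjm1 tj, HasDerivAt
        (fun t => ((tj ^ 2 - 2 * tjm1 * tj) * t + tjm1 * t ^ 2 - t ^ 3 / 3) / kj ^ 2)
        (c t) t := by
      intro t _
      have : HasDerivAt (fun t => ((tj ^ 2 - 2 * tjm1 * tj) * t + tjm1 * t ^ 2 - t ^ 3 / 3) / kj ^ 2)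
          (((tj ^ 2 - 2 * tjm1 * tj) * 1 + tjm1 * (2 * t) - (3 * t ^ 2) / 3) / kj ^ 2) t := by
        apply HasDerivAt.div_const
        apply HasDerivAt.sub
        apply HasDerivAt.add
        · exact (hasDerivAt_id t).const_mul _
        · have := ((hasDerivAt_pow 2 t).const_mul tjm1)
          simpa using this
        · have := (hasDerivAt_pow 3 t).div_const 3
          simpa using this
      convert this using 1
      rw [hc]
      field_simp
      ring
    rw [intervalIntegral.integral_eq_sub_of_hasDerivAt hF (hccont.intervalIntegrable _ _)]
    have : kj ^ 2 ≠ 0 := by positivity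
    field_simp
    rw [hk]
    ring
  have hmono : (∫ t in tjm1..tj, ‖ε' t‖)
      ≤ ∫ t in tjm1..tj, ((1 - c t) * ‖dej‖ + c t * ‖dejm1‖) := by
    apply intervalIntegral.integral_mono_on h.le
    · exact (hεcont.norm).intervalIntegrable _ _
    · exact (((continuous_const.sub hccont).mul continuous_const).add
        (hccont.mul continuous_const)).intervalIntegrable _ _
    · exact hbd
  have hgval : (∫ t in tjm1..tj, ((1 - c t) * ‖dej‖ + c t * ‖dejm1‖))
      = (kj - 2 * kj / 3) * ‖dej‖ + (2 * kj / 3) * ‖dejm1‖ := by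
    rw [intervalIntegral.integral_add (f := fun t => (1 - c t) * ‖dej‖) (g := fun t => c t * ‖dejm1‖)
        (((continuous_const.sub hccont).mul continuous_const).intervalIntegrable _ _)
        ((hccont.mul continuous_const).intervalIntegrable _ _),
      intervalIntegral.integral_mul_const, intervalIntegral.integral_mul_const,
      intervalIntegral.integral_sub intervalIntegrable_const (hccont.intervalIntegrable _ _),
      hcint, hk]
    norm_num
  have : (kj - 2 * kj / 3) * ‖dej‖ ≤ (4 * kj / 3) * ‖dej‖ := by
    apply mul_le_mul_of_nonneg_right _ (norm_nonneg _)
    linarith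
  linarith [hmono, hgval.le, hgval.ge, this]
end

section
/- Let H be a Hilbert space with inner product ⟨·,·⟩, a a continuous symmetric positive semidefinite bilinear form on a subspace V ⊆ H, and let ρ : [0,τ] → V, e : [0,τ] → H be C¹ functions (with e'' existing weakly) satisfying ⟨e''(t), v⟩ + a(ρ(t), v) = 0 for all v ∈ V and a.e. t. Set ṽ(t) = ∫_t^τ ρ(s) ds and ε = ρ − e. Then (1/2)‖ρ(τ)‖² − (1/2)‖ρ(0)‖² + (1/2) a(ṽ(0), ṽ(0)) = ∫_0^τ ⟨ε'(t), ρ(t)⟩ dt + ⟨e'(0), ṽ(0)⟩. -/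
open MeasureTheory intervalIntegral Set


/-- Abstract Baker testing identity: testing the error equation with ṽ(t) = ∫_t^τ ρ
    and integrating in time yields
    (1/2)‖ρ(τ)‖² - (1/2)‖ρ(0)‖² + (1/2)a(ṽ(0),ṽ(0))
      = ∫_0^τ ⟨ε'(t), ρ(t)⟩ dt + ⟨e'(0), ṽ(0)⟩. -/
theorem baker_testing_identity
    {H : Type*} [NormedAddCommGroup H] [InnerProductSpace ℝ H] [CompleteSpace H]
    (a : H →ₗ[ℝ] H →ₗ[ℝ] ℝ)
    (hcont : ∃ C : ℝ, ∀ x y : H, |a x y| ≤ C * ‖x‖ * ‖y‖)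
    (hsym : ∀ x y : H, a x y = a y x)
    (V : Submodule ℝ H)
    (hpsd : ∀ v ∈ V, 0 ≤ a v v)
    (τ : ℝ) (hτ : 0 ≤ τ)
    (ρ ρ' e e' e'' : ℝ → H)
    (hρV : ∀ t ∈ Set.Icc 0 τ, ρ t ∈ V)
    (hρ : ∀ t ∈ Set.Icc 0 τ, HasDerivWithinAt ρ (ρ' t) (Set.Icc 0 τ) t)
    (hρ' : ContinuousOn ρ' (Set.Icc 0 τ))
    (he : ∀ t ∈ Set.Icc 0 τ, HasDerivWithinAt e (e' t) (Set.Icc 0 τ) t)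
    (he' : ∀ t ∈ Set.Icc 0 τ, HasDerivWithinAt e' (e'' t) (Set.Icc 0 τ) t)
    (he'' : ContinuousOn e'' (Set.Icc 0 τ))
    (heq : ∀ t ∈ Set.Icc 0 τ, ∀ v ∈ V, inner ℝ (e'' t) v + a (ρ t) v = 0)
    (tv : ℝ → H) (htv : ∀ t, tv t = ∫ s in t..τ, ρ s)
    (ε' : ℝ → H) (hε' : ∀ t, ε' t = ρ' t - e' t) :
    (1 / 2) * ‖ρ τ‖ ^ 2 - (1 / 2) * ‖ρ 0‖ ^ 2 + (1 / 2) * a (tv 0) (tv 0)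
      = (∫ t in (0:ℝ)..τ, (inner ℝ (ε' t) (ρ t) : ℝ)) + inner ℝ (e' 0) (tv 0) := by
  obtain ⟨C, hC⟩ := hcont
  set A : H →L[ℝ] H →L[ℝ] ℝ :=
    LinearMap.mkContinuous₂ a C (fun x y => by simpa [Real.norm_eq_abs] using hC x y) with hA
  have hAa : ∀ x y : H, A x y = a x y := fun x y => rfl
  -- continuity facts
  have hρc : ContinuousOn ρ (Icc 0 τ) := fun t ht => (hρ t ht).continuousWithinAt
  have he'c : ContinuousOn e' (Icc 0 τ) := fun t ht => (he' t ht).continuousWithinAt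
  -- integrability of ρ on subintervals
  have hρint : ∀ t ∈ Icc 0 τ, IntervalIntegrable ρ volume t τ := by
    intro t ht
    apply (hρc.mono _).intervalIntegrable
    rw [uIcc_of_le ht.2]
    exact Icc_subset_Icc ht.1 le_rfl
  have hρint0 : ∀ t ∈ Icc 0 τ, IntervalIntegrable ρ volume 0 t := by
    intro t ht
    apply (hρc.mono _).intervalIntegrable
    rw [uIcc_of_le ht.1]
    exact Icc_subset_Icc le_rfl ht.2
  -- derivative of tv
  have htv' : ∀ t ∈ Icc 0 τ, HasDerivWithinAt tv (-ρ t) (Icc 0 τ) t := by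
    intro t ht
    haveI : Fact (t ∈ Icc (0:ℝ) τ) := ⟨ht⟩
    have hg : HasDerivWithinAt (fun u => ∫ s in (0:ℝ)..u, ρ s) (ρ t) (Icc 0 τ) t :=
      integral_hasDerivWithinAt_right (hρint0 t ht)
        (hρc.stronglyMeasurableAtFilter_nhdsWithin measurableSet_Icc t)
        (hρc t ht)
    have : HasDerivWithinAt (fun u => (∫ s in (0:ℝ)..τ, ρ s) - ∫ s in (0:ℝ)..u, ρ s)
        (0 - ρ t) (Icc 0 τ) t := (hasDerivWithinAt_const t _ _).sub hg
    rw [zero_sub] at this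
    refine this.congr (fun u hu => ?_) ?_
    · rw [htv u, integral_interval_sub_left (hρint0 τ (right_mem_Icc.2 hτ)) (hρint0 u hu)]
    · rw [htv t, integral_interval_sub_left (hρint0 τ (right_mem_Icc.2 hτ)) (hρint0 t ht)]
  have htvτ : tv τ = 0 := by rw [htv, integral_same]
  -- the orthogonality relation
  have hkey : ∀ t ∈ Icc 0 τ, (inner ℝ (e'' t) (tv t) : ℝ) + A (ρ t) (tv t) = 0 := by
    intro t ht
    have h1 : (inner ℝ (e'' t) (tv t) : ℝ) = ∫ s in t..τ, (inner ℝ (e'' t) (ρ s) : ℝ) := by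
      rw [htv]
      exact ((innerSL ℝ (e'' t)).intervalIntegral_comp_comm (hρint t ht)).symm
    have h2 : A (ρ t) (tv t) = ∫ s in t..τ, A (ρ t) (ρ s) := by
      rw [htv]
      exact ((A (ρ t)).intervalIntegral_comp_comm (hρint t ht)).symm
    rw [h1, h2, ← intervalIntegral.integral_add]
    · rw [intervalIntegral.integral_congr (g := fun _ => (0:ℝ)), intervalIntegral.integral_zero]
      intro s hs
      rw [uIcc_of_le ht.2] at hs
      have hs' : s ∈ Icc 0 τ := ⟨le_trans ht.1 hs.1, hs.2⟩
      simpa [hAa] using heq t ht (ρ s) (hρV s hs')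
    · apply ContinuousOn.intervalIntegrable
      apply Continuous.comp_continuousOn (innerSL ℝ (e'' t)).continuous
      rw [uIcc_of_le ht.2]; exact hρc.mono (Icc_subset_Icc ht.1 le_rfl)
    · apply ContinuousOn.intervalIntegrable
      apply Continuous.comp_continuousOn (A (ρ t)).continuous
      rw [uIcc_of_le ht.2]; exact hρc.mono (Icc_subset_Icc ht.1 le_rfl)
  -- the energy function
  set G : ℝ → ℝ := fun t =>
    (1 / 2) * (inner ℝ (ρ t) (ρ t) : ℝ) - (1 / 2) * A (tv t) (tv t)
      + (inner ℝ (e' t) (tv t) : ℝ) with hG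
  have hG' : ∀ t ∈ Icc 0 τ, HasDerivWithinAt G (inner ℝ (ε' t) (ρ t) : ℝ) (Icc 0 τ) t := by
    intro t ht
    have h1 : HasDerivWithinAt (fun t => (inner ℝ (ρ t) (ρ t) : ℝ))
        ((inner ℝ (ρ t) (ρ' t) : ℝ) + (inner ℝ (ρ' t) (ρ t) : ℝ)) (Icc 0 τ) t :=
      (hρ t ht).inner ℝ (hρ t ht)
    have hc : HasDerivWithinAt (fun t => A (tv t)) (A (-ρ t)) (Icc 0 τ) t :=
      A.hasFDerivAt.comp_hasDerivWithinAt t (htv' t ht)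
    have h2 : HasDerivWithinAt (fun t => A (tv t) (tv t))
        (A (-ρ t) (tv t) + A (tv t) (-ρ t)) (Icc 0 τ) t :=
      hc.clm_apply (htv' t ht)
    have h3 : HasDerivWithinAt (fun t => (inner ℝ (e' t) (tv t) : ℝ))
        ((inner ℝ (e' t) (-ρ t) : ℝ) + (inner ℝ (e'' t) (tv t) : ℝ)) (Icc 0 τ) t :=
      (he' t ht).inner ℝ (htv' t ht)
    have := ((h1.const_mul (1/2 : ℝ)).sub (h2.const_mul (1/2 : ℝ))).add h3
    refine this.congr_deriv ?_
    have hsymA : A (tv t) (ρ t) = A (ρ t) (tv t) := by rw [hAa, hAa, hsym]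
    have hk := hkey t ht
    rw [hε']
    simp only [map_neg, ContinuousLinearMap.neg_apply, inner_neg_right, inner_sub_left,
      real_inner_comm (ρ t) (ρ' t)]
    linarith
  -- FTC
  have hGc : ContinuousOn G (Icc 0 τ) := fun t ht => (hG' t ht).continuousWithinAt
  have hintc : ContinuousOn (fun t => (inner ℝ (ε' t) (ρ t) : ℝ)) (Icc 0 τ) := by
    have : ContinuousOn ε' (Icc 0 τ) := by
      have := hρ'.sub he'c
      exact this.congr fun t ht => by rw [hε']; rfl
    exact this.inner hρc
  have hftc : ∫ t in (0:ℝ)..τ, (inner ℝ (ε' t) (ρ t) : ℝ) = G τ - G 0 := by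
    apply integral_eq_sub_of_hasDeriv_right_of_le hτ hGc
    · intro x hx
      have hx' : x ∈ Icc 0 τ := Ioo_subset_Icc_self hx
      have : HasDerivAt G (inner ℝ (ε' x) (ρ x) : ℝ) x :=
        (hG' x hx').hasDerivAt (Icc_mem_nhds hx.1 hx.2)
      exact this.hasDerivWithinAt
    · exact hintc.intervalIntegrable_of_Icc hτ
  have hGτ : G τ = (1 / 2) * (inner ℝ (ρ τ) (ρ τ) : ℝ) := by
    simp [hG, htvτ]
  have h0 : (0:ℝ) ∈ Icc 0 τ := left_mem_Icc.2 hτ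
  have hnorm : ∀ x : H, (inner ℝ x x : ℝ) = ‖x‖ ^ 2 := fun x => real_inner_self_eq_norm_sq x
  have haA : a (tv 0) (tv 0) = A (tv 0) (tv 0) := rfl
  rw [haA, ← hnorm, ← hnorm, hftc, hGτ, hG]
  ring
end
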